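/- With E(N) = 2^{−3+4/π} e^{2/π} π^{2/π−1} N^{3/2+1/π} (N+1)^{−1/2+1/π} log(1 + 1/N) and f_2(N) = (1/(12π²))·[ −3π(2 + π − 2 log(4π)) + (log N)² + 3π log(N+1) + (3π − 2 log(N+1)) log N + (log(N+1))² ], the leading-order saddle point value satisfies lim_{N→∞} E(N) · √(2π / f_2(N)) · 4√(log N) / (4π e N)^{2/π} = 1; that is, E(N)√(2π/f_2(N)) ≃ (4π N e)^{2/π} / (4√(log N)) as N → ∞. -/

import Mathlib

open Filter Real

/-- E(N) = e^{−f₀(N)}, the exponential of the zeroth Taylor coefficient at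
φ = 0 in the Laplace evaluation of Σ_{j=0}^{N} K_{jj} for the weight e^{−√x}. -/
noncomputable def E (N : ℕ) : ℝ :=
  (2 : ℝ) ^ (-3 + 4 / π) * Real.exp (2 / π) * π ^ (2 / π - 1)
    * (N : ℝ) ^ ((3 : ℝ) / 2 + 1 / π) * ((N : ℝ) + 1) ^ (-(1 : ℝ) / 2 + 1 / π)
    * Real.log (1 + 1 / (N : ℝ))

/-- The second Taylor coefficient at φ = 0 in the Laplace evaluation of
Σ_{j=0}^{N} K_{jj} for the weight e^{−√x}. -/
noncomputable def f₂ (N : ℕ) : ℝ :=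
  (1 / (12 * π ^ 2)) *
    (-3 * π * (2 + π - 2 * Real.log (4 * π)) + (Real.log N) ^ 2
      + 3 * π * Real.log (N + 1)
      + (3 * π - 2 * Real.log (N + 1)) * Real.log N
      + (Real.log (N + 1)) ^ 2)

lemma limL : Tendsto (fun N : ℕ => Real.log N) atTop atTop :=
  Real.tendsto_log_atTop.comp tendsto_natCast_atTop_atTop

lemma limInvL : Tendsto (fun N : ℕ => (Real.log N)⁻¹) atTop (nhds 0) :=
  tendsto_inv_atTop_zero.comp limL

lemma limD : Tendsto (fun N : ℕ => Real.log ((N : ℝ) + 1) - Real.log N) atTop (nhds 0) := by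
  have h1 : Tendsto (fun N : ℕ => 1 + 1 / (N : ℝ)) atTop (nhds 1) := by
    simpa using (tendsto_const_nhds (x := (1:ℝ))).add (tendsto_one_div_atTop_nhds_zero_nat (𝕜 := ℝ))
  have h2 : Tendsto (fun N : ℕ => Real.log (1 + 1 / (N : ℝ))) atTop (nhds 0) := by
    have := (Real.continuousAt_log (by norm_num : (1 : ℝ) ≠ 0)).tendsto.comp h1
    simpa [Function.comp_def] using this
  apply h2.congr'
  filter_upwards [eventually_ge_atTop 1] with N hN
  have hN0 : (0 : ℝ) < N := by exact_mod_cast hN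
  rw [← Real.log_div (by positivity) (ne_of_gt hN0)]
  congr 1
  field_simp

lemma limf2L : Tendsto (fun N : ℕ => f₂ N / Real.log N) atTop (nhds (1 / (2 * π))) := by
  have key : Tendsto (fun N : ℕ =>
      (1 / (12 * π ^ 2)) * ((-3 * π * (2 + π - 2 * Real.log (4 * π))) * (Real.log N)⁻¹
        + (Real.log ((N : ℝ) + 1) - Real.log N) ^ 2 * (Real.log N)⁻¹
        + 3 * π
        + 3 * π * (1 + (Real.log ((N : ℝ) + 1) - Real.log N) * (Real.log N)⁻¹)))
      atTop (nhds (1 / (2 * π))) := by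
    have hval : (1 / (2 * π) : ℝ)
        = (1 / (12 * π ^ 2)) * ((-3 * π * (2 + π - 2 * Real.log (4 * π))) * 0
            + 0 ^ 2 * 0 + 3 * π + 3 * π * (1 + 0 * 0)) := by
      field_simp
      ring
    rw [hval]
    exact Tendsto.const_mul _
      ((((tendsto_const_nhds.mul limInvL).add ((limD.pow 2).mul limInvL)).add
        tendsto_const_nhds).add
        (tendsto_const_nhds.mul (tendsto_const_nhds.add (limD.mul limInvL))))
  apply key.congr'
  filter_upwards [eventually_ge_atTop 2] with N hN
  have h2 : (2 : ℝ) ≤ (N : ℝ) := by exact_mod_cast hN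
  have hL : 0 < Real.log N := Real.log_pos (by linarith)
  unfold f₂
  field_simp
  ring

lemma limQ : Tendsto (fun N : ℕ => 2 * π * Real.log N / f₂ N) atTop (nhds (4 * π ^ 2)) := by
  have hπ := Real.pi_pos
  have h := (tendsto_const_nhds (x := (2 * π : ℝ)) (f := atTop)).div limf2L (by positivity)
  have e : (2 * π / (1 / (2 * π)) : ℝ) = 4 * π ^ 2 := by
    field_simp; ring
  rw [e] at h
  apply h.congr
  intro N
  simp only [Pi.div_apply]
  rw [div_div_eq_mul_div]

lemma limH : Tendsto (fun N : ℕ => Real.sqrt (2 * π * Real.log N / f₂ N) / (2 * π))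
    atTop (nhds 1) := by
  have hπ := Real.pi_pos
  have h := (Real.continuous_sqrt.tendsto _).comp limQ
  have hs : Real.sqrt (4 * π ^ 2) = 2 * π := by
    rw [show (4 * π ^ 2 : ℝ) = (2 * π) ^ 2 by ring, Real.sqrt_sq (by positivity)]
  rw [hs] at h
  have := h.div_const (2 * π)
  simpa [div_self (show (2 * π : ℝ) ≠ 0 by positivity)] using this

lemma limA : Tendsto (fun N : ℕ => (N : ℝ) * Real.log (1 + 1 / (N : ℝ))) atTop (nhds 1) :=
  (Real.tendsto_mul_log_one_add_div_atTop 1).comp tendsto_natCast_atTop_atTop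

lemma limB : Tendsto (fun N : ℕ => ((N : ℝ) / ((N : ℝ) + 1)) ^ ((1 : ℝ) / 2 - 1 / π))
    atTop (nhds 1) := by
  have h1 : Tendsto (fun N : ℕ => (N : ℝ) / ((N : ℝ) + 1)) atTop (nhds 1) :=
    tendsto_natCast_div_add_atTop 1
  have h2 := (Real.continuousAt_rpow_const 1 ((1 : ℝ) / 2 - 1 / π)
    (Or.inl one_ne_zero)).tendsto.comp h1
  simpa [Function.comp_def] using h2

/-- The leading-order saddle point value satisfies
lim_{N→∞} E(N)·√(2π/f₂(N))·4√(log N) / (4πeN)^{2/π} = 1, i.e.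
E(N)√(2π/f₂(N)) ≃ (4πNe)^{2/π} / (4√(log N)) as N → ∞. -/
theorem saddle_point_leading_order :
    Tendsto (fun N : ℕ =>
        E N * Real.sqrt (2 * π / f₂ N) * (4 * Real.sqrt (Real.log N))
          / (4 * π * Real.exp 1 * (N : ℝ)) ^ ((2 : ℝ) / π))
      atTop (nhds 1) := by
  have hπ := Real.pi_pos
  have hlim : Tendsto (fun N : ℕ => ((N : ℝ) * Real.log (1 + 1 / (N : ℝ)))
      * (((N : ℝ) / ((N : ℝ) + 1)) ^ ((1 : ℝ) / 2 - 1 / π))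
      * (Real.sqrt (2 * π * Real.log N / f₂ N) / (2 * π))) atTop (nhds 1) := by
    have := (limA.mul limB).mul limH
    simpa using this
  refine Tendsto.congr' ?_ hlim
  have hf : ∀ᶠ N : ℕ in atTop, 0 < f₂ N := by
    have h1 : ∀ᶠ N : ℕ in atTop, 1 / (4 * π) < f₂ N / Real.log N :=
      limf2L.eventually (eventually_gt_nhds
        (by rw [div_lt_div_iff₀ (by positivity) (by positivity)]; nlinarith))
    filter_upwards [h1, eventually_ge_atTop 2] with N h hN
    have h2 : (2 : ℝ) ≤ (N : ℝ) := by exact_mod_cast hN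
    have hL : 0 < Real.log N := Real.log_pos (by linarith)
    have hpos : 0 < f₂ N / Real.log N := lt_trans (by positivity) h
    have := mul_pos hpos hL
    rwa [div_mul_cancel₀ _ (ne_of_gt hL)] at this
  filter_upwards [hf, eventually_ge_atTop 2] with N hfN hN
  have h2 : (2 : ℝ) ≤ (N : ℝ) := by exact_mod_cast hN
  have hn0 : (0 : ℝ) < (N : ℝ) := by linarith
  have hn1 : (0 : ℝ) < (N : ℝ) + 1 := by linarith
  have hL : 0 < Real.log N := Real.log_pos (by linarith)
  -- combine square roots
  have hsq : Real.sqrt (2 * π / f₂ N) * Real.sqrt (Real.log N)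
      = Real.sqrt (2 * π * Real.log N / f₂ N) := by
    rw [← Real.sqrt_mul (by positivity) (Real.log N)]
    congr 1
    ring
  -- rpow expansions
  have e4 : (4 * π * Real.exp 1 * (N : ℝ)) ^ ((2 : ℝ) / π)
      = (2 : ℝ) ^ ((4 : ℝ) / π) * π ^ ((2 : ℝ) / π) * Real.exp (2 / π)
        * (N : ℝ) ^ ((2 : ℝ) / π) := by
    rw [Real.mul_rpow (by positivity) hn0.le,
      Real.mul_rpow (by positivity) (Real.exp_pos 1).le,
      Real.mul_rpow (by norm_num) hπ.le, Real.exp_one_rpow]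
    have h22 : (2 : ℝ) ^ ((2 : ℝ)) = 4 := by
      rw [show ((2 : ℝ)) = ((2 : ℕ) : ℝ) by norm_num, Real.rpow_natCast]
      norm_num
    have h4 : (4 : ℝ) ^ ((2 : ℝ) / π) = (2 : ℝ) ^ ((4 : ℝ) / π) := by
      rw [show ((4 : ℝ) / π) = 2 * (2 / π) by ring, Real.rpow_mul (by norm_num), h22]
    rw [h4]
  have e2 : (2 : ℝ) ^ (-3 + 4 / π) = (2 : ℝ) ^ ((4 : ℝ) / π) / 8 := by
    rw [show (-3 + 4 / π : ℝ) = 4 / π - 3 by ring, Real.rpow_sub (by norm_num)]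
    congr 1
    rw [show ((3 : ℝ)) = ((3 : ℕ) : ℝ) by norm_num, Real.rpow_natCast]
    norm_num
  have eπ : π ^ (2 / π - 1) = π ^ ((2 : ℝ) / π) / π := by
    rw [Real.rpow_sub hπ, Real.rpow_one]
  have en : (N : ℝ) ^ ((3 : ℝ) / 2 + 1 / π)
      = (N : ℝ) * (N : ℝ) ^ ((1 : ℝ) / 2 - 1 / π) * (N : ℝ) ^ ((2 : ℝ) / π) := by
    rw [show ((3 : ℝ) / 2 + 1 / π) = 1 + (1 / 2 - 1 / π) + 2 / π by ring,
      Real.rpow_add hn0, Real.rpow_add hn0, Real.rpow_one]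
  have en1 : ((N : ℝ) + 1) ^ (-(1 : ℝ) / 2 + 1 / π)
      = (((N : ℝ) + 1) ^ ((1 : ℝ) / 2 - 1 / π))⁻¹ := by
    rw [show (-(1 : ℝ) / 2 + 1 / π) = -(1 / 2 - 1 / π) by ring, Real.rpow_neg hn1.le]
  have ediv : ((N : ℝ) / ((N : ℝ) + 1)) ^ ((1 : ℝ) / 2 - 1 / π)
      = (N : ℝ) ^ ((1 : ℝ) / 2 - 1 / π) / ((N : ℝ) + 1) ^ ((1 : ℝ) / 2 - 1 / π) :=
    Real.div_rpow hn0.le hn1.le _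
  -- abbreviations
  unfold E
  have rearr : ∀ x : ℝ, x * Real.sqrt (2 * π / f₂ N) * (4 * Real.sqrt (Real.log N))
      = 4 * x * Real.sqrt (2 * π * Real.log N / f₂ N) := by
    intro x; rw [← hsq]; ring
  rw [e4, e2, eπ, en, en1, ediv, rearr]
  have ha : (0 : ℝ) < (2 : ℝ) ^ ((4 : ℝ) / π) := Real.rpow_pos_of_pos (by norm_num) _
  have hb : (0 : ℝ) < π ^ ((2 : ℝ) / π) := Real.rpow_pos_of_pos hπ _
  have hc : (0 : ℝ) < Real.exp (2 / π) := Real.exp_pos _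
  have hp : (0 : ℝ) < (N : ℝ) ^ ((1 : ℝ) / 2 - 1 / π) := Real.rpow_pos_of_pos hn0 _
  have hq : (0 : ℝ) < ((N : ℝ) + 1) ^ ((1 : ℝ) / 2 - 1 / π) := Real.rpow_pos_of_pos hn1 _
  have hr : (0 : ℝ) < (N : ℝ) ^ ((2 : ℝ) / π) := Real.rpow_pos_of_pos hn0 _
  field_simp
  ring
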